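/- Let M be a slant submanifold of a framed metric f-manifold with slant angle θ, i.e., T² = -cos²θ (I - Σₖ ηᵏ ⊗ ξₖ). Then the normal part N of φ satisfies g(NX, NY) = sin²θ {g(X,Y) - Σₖ ηᵏ(X)ηᵏ(Y)} for all X, Y tangent to M. -/

import Mathlib

open scoped RealInnerProductSpace

/-- Let `M` be a `θ`-slant submanifold (tangent to all the `ξₖ`) of a framed
metric `f`-manifold, i.e. `T² = -cos²θ (I - Σₖ ηᵏ ⊗ ξₖ)` on `TM`. Then the
normal part `N` of `φ` satisfies
`g(NX, NY) = sin²θ {g(X,Y) - Σₖ ηᵏ(X)ηᵏ(Y)}` for all tangent `X, Y`. -/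
theorem slant_submanifold_g_NX_NY
    {V : Type*} [NormedAddCommGroup V] [InnerProductSpace ℝ V]
    [FiniteDimensional ℝ V] {s : ℕ} (θ : ℝ)
    (φ : V →ₗ[ℝ] V) (ξ : Fin s → V) (η : Fin s → (V →ₗ[ℝ] ℝ))
    (W : Submodule ℝ V)
    (hηξ : ∀ i j : Fin s, η j (ξ i) = if i = j then 1 else 0)
    (hφ2 : ∀ X : V, φ (φ X) = -X + ∑ i, η i X • ξ i)
    (hη : ∀ (i : Fin s) (X : V), η i X = ⟪X, ξ i⟫)
    (hcompat : ∀ X Y : V, ⟪φ X, φ Y⟫ = ⟪X, Y⟫ - ∑ i, η i X * η i Y)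
    (hskew : ∀ X Y : V, ⟪φ X, Y⟫ = -⟪X, φ Y⟫)
    (hξW : ∀ i : Fin s, ξ i ∈ W)
    (T N : V → V) (hT : ∀ x : V, T x = (Submodule.orthogonalProjectionOnto W (φ x) : V))
    (hN : ∀ x : V, N x = φ x - (Submodule.orthogonalProjectionOnto W (φ x) : V))
    (hslant : ∀ x ∈ W, T (T x) = -(Real.cos θ ^ 2) • (x - ∑ k, η k x • ξ k)) :
    ∀ x ∈ W, ∀ y ∈ W,
      ⟪N x, N y⟫ = Real.sin θ ^ 2 * (⟪x, y⟫ - ∑ k, η k x * η k y) := by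
  intro x hx y hy
  have hTmem : ∀ z : V, T z ∈ W := fun z => by
    rw [hT]; exact (Submodule.orthogonalProjectionOnto W (φ z)).2
  have hNmem : ∀ z : V, N z ∈ Wᗮ := fun z => by
    rw [hN]; exact Submodule.sub_starProjection_mem_orthogonal (K := W) (φ z)
  have hsplit : ∀ z : V, φ z = T z + N z := fun z => by
    rw [hT, hN]; abel
  have hNW : ∀ (z : V) (w : V), w ∈ W → ⟪N z, w⟫ = 0 := fun z w hw =>
    Submodule.inner_left_of_mem_orthogonal hw (hNmem z)
  have hTskew : ∀ a ∈ W, ∀ b ∈ W, ⟪T a, b⟫ = -⟪a, T b⟫ := by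
    intro a ha b hb
    have h1 : ⟪T a, b⟫ = ⟪φ a, b⟫ := by
      rw [hsplit a, inner_add_left, hNW a b hb]; ring
    have h2 : ⟪a, T b⟫ = ⟪a, φ b⟫ := by
      have h0 : ⟪a, N b⟫ = 0 := by rw [real_inner_comm]; exact hNW b a ha
      rw [hsplit b, inner_add_right, h0]; ring
    rw [h1, h2, hskew]
  -- inner of the η-sum with an arbitrary vector
  have hsum : ∀ a b : V, ⟪∑ k, η k a • ξ k, b⟫ = ∑ k, η k a * η k b := by
    intro a b
    rw [sum_inner]
    refine Finset.sum_congr rfl fun k _ => ?_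
    rw [real_inner_smul_left, hη k b, real_inner_comm]
  -- T-part inner product
  have hTT : ⟪T x, T y⟫ = Real.cos θ ^ 2 * (⟪x, y⟫ - ∑ k, η k x * η k y) := by
    have h2 : ⟪T (T x), y⟫ = -⟪T x, T y⟫ := hTskew (T x) (hTmem x) y hy
    have h3 : ⟪T (T x), y⟫ = -(Real.cos θ ^ 2) * (⟪x, y⟫ - ∑ k, η k x * η k y) := by
      rw [hslant x hx, real_inner_smul_left, inner_sub_left, hsum]
    have := h2.symm.trans h3
    linarith
  -- normal part
  have hNN : ⟪N x, N y⟫ = ⟪φ x, φ y⟫ - ⟪T x, T y⟫ := by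
    have e1 : ⟪φ x, φ y⟫ = ⟪T x, T y⟫ + ⟪T x, N y⟫ + ⟪N x, T y⟫ + ⟪N x, N y⟫ := by
      rw [hsplit x, hsplit y, inner_add_left, inner_add_right, inner_add_right]; ring
    have e2 : ⟪N x, T y⟫ = 0 := hNW x (T y) (hTmem y)
    have e3 : ⟪T x, N y⟫ = 0 := by rw [real_inner_comm]; exact hNW y (T x) (hTmem x)
    rw [e2, e3] at e1; linarith
  rw [hNN, hTT, hcompat]
  have hpy : Real.sin θ ^ 2 = 1 - Real.cos θ ^ 2 := by
    have := Real.sin_sq_add_cos_sq θ; linarith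
  rw [hpy]; ring
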